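/- arXiv:1211.1074 — 2 statements merged into one kernel-verified Lean document; each statement's English description precedes it below -/
import Mathlib

section
/- Let E = O(a_1) ⊕ ... ⊕ O(a_n) be a direct sum of line bundles on ℙ¹ with Σ a_i = 0, equipped with n-dimensional subspaces F_j ⊂ E_{x_j} ⊕ E_{z_j} (j = 1,...,g) at pairs of distinct points, each F_j a graph of an isomorphism. Suppose the stability inequality μ(E₁) + (Σ_j dim(F_j ∩ (E₁_{x_j} ⊕ E₁_{z_j})))/rk(E₁) < g holds for every nonzero proper subbundle E₁ ⊂ E. Then −g+1 ≤ a_i ≤ g−1 for every i. -/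
/-!
STATEMENT 9: let E = O(a_1) ⊕ ... ⊕ O(a_n) on ℙ¹ with Σ a_i = 0, equipped with
n-dimensional graph subspaces F_j ⊂ E_{x_j} ⊕ E_{z_j}, j = 1,...,g.  If the
GPS-stability inequality
  μ(E₁) + (Σ_j dim(F_j ∩ (E₁_{x_j} ⊕ E₁_{z_j})))/rk(E₁) < g
holds for every nonzero proper subbundle E₁ ⊂ E, then −g+1 ≤ a_i ≤ g−1 for all i.

Formalization: a subbundle E₁ = ⊕_{i∈S} O(a_i) of the split bundle is recorded
by a nonempty proper subset S ⊆ {1,...,n}, with rank |S| and degree Σ_{i∈S} a_i;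
`f S j = dim(F_j ∩ (E₁_{x_j} ⊕ E₁_{z_j}))` is the intersection-dimension
function, which (since each F_j is an n-dimensional graph in the 2n-dimensional
fiber sum) satisfies f S j ≥ 2|S| − n (cf. STATEMENT 7).
-/

theorem splitting_type_bounds_of_gps_stability
    (n g : ℕ) (hn : 1 ≤ n) (hg : 1 ≤ g)
    (a : Fin n → ℤ) (hdeg : ∑ i, a i = 0)
    (f : Finset (Fin n) → Fin g → ℕ)
    (hgraph : ∀ (S : Finset (Fin n)) (j : Fin g), (2 * S.card : ℤ) - n ≤ (f S j : ℤ))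
    (hstab : ∀ S : Finset (Fin n), S.Nonempty → S ≠ Finset.univ →
      ((∑ i ∈ S, a i : ℤ) : ℚ) / S.card + ((∑ j, f S j : ℕ) : ℚ) / S.card < (g : ℚ)) :
    ∀ i, -(g : ℤ) + 1 ≤ a i ∧ a i ≤ (g : ℤ) - 1 := by
  intro i
  by_cases hn1 : n = 1
  · -- n = 1 : the only subset is trivial, but then a i = 0 directly from hdeg
    subst hn1
    have hi : i = 0 := Subsingleton.elim i 0
    have h0 : a i = 0 := by
      rw [hi]
      simpa using hdeg
    have hg' : (1 : ℤ) ≤ g := by exact_mod_cast hg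
    omega
  · have hn2 : 2 ≤ n := by omega
    constructor
    · -- lower bound: test E₁ = ⊕_{k ≠ i} O(a_k), i.e. S = {i}ᶜ
      set S : Finset (Fin n) := {i}ᶜ with hSdef
      have hcard : S.card = n - 1 := by
        simp [hSdef, Finset.card_compl]
      have hne : S.Nonempty := by
        rw [← Finset.card_pos, hcard]; omega
      have hproper : S ≠ Finset.univ := by
        intro h
        have : i ∈ S := h ▸ Finset.mem_univ i
        simp [hSdef] at this
      have hsum : ∑ j ∈ S, a j = -a i := by
        have h2 : ∑ j ∈ ({i} : Finset (Fin n))ᶜ, a j + ∑ j ∈ ({i} : Finset (Fin n)), a j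
            = ∑ j, a j := Finset.sum_compl_add_sum {i} a
        rw [hdeg, Finset.sum_singleton] at h2
        rw [hSdef]
        omega
      have hcZ : (S.card : ℤ) = (n : ℤ) - 1 := by omega
      have hf : (g : ℤ) * ((n : ℤ) - 2) ≤ (∑ j, f S j : ℤ) := by
        push_cast
        calc (g : ℤ) * ((n : ℤ) - 2) = ∑ _j : Fin g, ((n : ℤ) - 2) := by
              simp [mul_comm]
              ring
          _ ≤ ∑ j, (f S j : ℤ) := by
              refine Finset.sum_le_sum fun j _ => ?_
              have := hgraph S j
              omega
      have h := hstab S hne hproper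
      have hcpos : (0 : ℚ) < (S.card : ℚ) := by
        exact_mod_cast Finset.card_pos.mpr hne
      rw [← add_div, div_lt_iff₀ hcpos] at h
      have h' : (∑ j ∈ S, a j : ℤ) + (∑ j, f S j : ℤ) < (g : ℤ) * (S.card : ℤ) := by
        exact_mod_cast h
      rw [hsum, hcZ] at h'
      nlinarith [h', hf]
    · -- upper bound: test E₁ = O(a_i), i.e. S = {i}
      have hproper : ({i} : Finset (Fin n)) ≠ Finset.univ := by
        intro h
        have : ({i} : Finset (Fin n)).card = n := by
          rw [h, Finset.card_univ, Fintype.card_fin]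
        simp at this
        omega
      have h := hstab {i} ⟨i, Finset.mem_singleton_self i⟩ hproper
      rw [Finset.card_singleton] at h
      simp only [Nat.cast_one, div_one, Finset.sum_singleton] at h
      have h' : (a i : ℤ) + (∑ j, f ({i} : Finset (Fin n)) j : ℤ) < (g : ℤ) := by
        exact_mod_cast h
      have hnn : (0 : ℤ) ≤ (∑ j, f ({i} : Finset (Fin n)) j : ℤ) := by positivity
      omega
end

section
/- The field ℂ(Tr(X), Tr(Y), Tr(X²), Tr(Y²), Tr(XY)) generated by the five trace functions on pairs of 2×2 matrices is a purely transcendental extension of ℂ of transcendence degree 5; i.e., the five functions Tr(X), Tr(Y), Tr(X²), Tr(Y²), Tr(XY) on M₂(ℂ) × M₂(ℂ) are algebraically independent over ℂ. -/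
/-!
STATEMENT 15: the five trace functions Tr(X), Tr(Y), Tr(X²), Tr(Y²), Tr(XY) of a
pair of generic 2×2 matrices X, Y (matrices of independent commuting
indeterminates) are algebraically independent over ℂ; equivalently the field
they generate is purely transcendental of transcendence degree 5 over ℂ.
-/

open MvPolynomial

/-- The polynomial ring in the 8 entries of two generic 2×2 matrices. -/
noncomputable abbrev GenRing := MvPolynomial (Fin 2 × Fin 2 × Fin 2) ℂ

/-- The first generic 2×2 matrix X = (x_{ij}). -/
noncomputable def genX : Matrix (Fin 2) (Fin 2) GenRing :=
  fun i j => MvPolynomial.X (0, i, j)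

/-- The second generic 2×2 matrix Y = (y_{ij}). -/
noncomputable def genY : Matrix (Fin 2) (Fin 2) GenRing :=
  fun i j => MvPolynomial.X (1, i, j)

/-- The target polynomial ring in 5 variables. -/
noncomputable abbrev R5 := MvPolynomial (Fin 5) ℂ

/-- The specialization of the 8 matrix entries: we substitute
`X := [[t₀/2, t₂/2 - t₀²/4], [1, t₀/2]]` and
`Y := [[t₁/2 + t₄, t₃/2 - t₁²/4 - t₄²], [1, t₁/2 - t₄]]`, so that the five traces
specialize to `t₀, t₁, t₂, t₃, (t₀t₁ + t₂ + t₃)/2 - (t₀² + t₁²)/4 - t₄²`. -/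
noncomputable def spec : Fin 2 × Fin 2 × Fin 2 → R5 := fun p =>
  ![![![C (1/2) * X 0, C (1/2) * X 2 - C (1/4) * X 0 ^ 2],
      ![1, C (1/2) * X 0]],
    ![![C (1/2) * X 1 + X 4, C (1/2) * X 3 - C (1/4) * X 1 ^ 2 - X 4 ^ 2],
      ![1, C (1/2) * X 1 - X 4]]] p.1 p.2.1 p.2.2

/-- The "junk" polynomial in the first four variables appearing in the image of `Tr(XY)`. -/
noncomputable def Pjunk : R5 :=
  C (1/2) * X 0 * X 1 + C (1/2) * X 2 - C (1/4) * X 0 ^ 2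
    + C (1/2) * X 3 - C (1/4) * X 1 ^ 2

/-- The images of the five traces under the specialization. -/
noncomputable def vfam : Fin 5 → R5 :=
  ![X 0, X 1, X 2, X 3, Pjunk - X 4 ^ 2]

/-- The univariate polynomials defining the model family. -/
noncomputable def pfam : Fin 5 → Polynomial ℂ :=
  ![Polynomial.X, Polynomial.X, Polynomial.X, Polynomial.X, Polynomial.X ^ 2]

/-- The model family: four variables and the square of the fifth. -/
noncomputable def ufam : Fin 5 → R5 :=
  fun i => Polynomial.aeval (X i : R5) (pfam i)

lemma transcendental_X_pow_two : Transcendental ℂ (Polynomial.X ^ 2 : Polynomial ℂ) := by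
  refine Polynomial.transcendental _ (by simp) ?_
  have h : (Polynomial.X ^ 2 : Polynomial ℂ).leadingCoeff = 1 :=
    (Polynomial.monic_X_pow 2).leadingCoeff
  rw [h]
  exact mem_nonZeroDivisors_of_ne_zero one_ne_zero

lemma ufam_indep : AlgebraicIndependent ℂ ufam := by
  apply MvPolynomial.algebraicIndependent_polynomial_aeval_X
  intro i
  fin_cases i
  · exact Polynomial.transcendental_X ℂ
  · exact Polynomial.transcendental_X ℂ
  · exact Polynomial.transcendental_X ℂ
  · exact Polynomial.transcendental_X ℂ
  · exact transcendental_X_pow_two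

/-- The triangular involution `X 4 ↦ Pjunk - X 4` of the 5-variable polynomial ring. -/
noncomputable def sigma : R5 →ₐ[ℂ] R5 :=
  aeval ![X 0, X 1, X 2, X 3, Pjunk - X 4]

lemma sigma_sigma : sigma.comp sigma = AlgHom.id ℂ R5 := by
  apply MvPolynomial.algHom_ext
  intro i
  fin_cases i <;>
    simp [sigma, Pjunk, map_sub, map_add, map_mul, map_pow]

lemma sigma_inj : Function.Injective sigma := by
  have h : Function.LeftInverse ⇑sigma ⇑sigma := fun x => by
    have := congrArg (fun f => f x) (congrArg DFunLike.coe sigma_sigma)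
    simpa using this
  exact h.injective

lemma aeval_v_eq : (aeval vfam : R5 →ₐ[ℂ] R5) = (aeval ufam).comp sigma := by
  apply MvPolynomial.algHom_ext
  intro i
  fin_cases i <;>
    simp [vfam, ufam, pfam, sigma, Pjunk, map_sub, map_add, map_mul, map_pow,
      Matrix.cons_val_zero, Matrix.cons_val_one]

lemma vfam_indep : AlgebraicIndependent ℂ vfam := by
  rw [algebraicIndependent_iff_injective_aeval, aeval_v_eq, AlgHom.coe_comp]
  exact (algebraicIndependent_iff_injective_aeval.1 ufam_indep).comp sigma_inj

lemma key0 : (aeval spec : GenRing →ₐ[ℂ] R5) (Matrix.trace genX) = X 0 := by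
  simp only [Matrix.trace, Matrix.diag, genX, Fin.sum_univ_two, map_add, aeval_X, spec,
    Matrix.cons_val_zero, Matrix.cons_val_one, Matrix.head_cons]
  ring_nf
  rw [(map_ofNat C 2 : (C : ℂ →+* R5) 2 = 2).symm]
  simp only [← C_mul, mul_comm, mul_assoc, mul_left_comm]
  norm_num

lemma key1 : (aeval spec : GenRing →ₐ[ℂ] R5) (Matrix.trace genY) = X 1 := by
  simp only [Matrix.trace, Matrix.diag, genY, Fin.sum_univ_two, map_add, aeval_X, spec,
    Matrix.cons_val_zero, Matrix.cons_val_one, Matrix.head_cons]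
  ring_nf
  rw [(map_ofNat C 2 : (C : ℂ →+* R5) 2 = 2).symm]
  simp only [← C_mul, mul_comm, mul_assoc, mul_left_comm]
  norm_num

lemma key2 : (aeval spec : GenRing →ₐ[ℂ] R5) (Matrix.trace (genX * genX)) = X 2 := by
  simp only [Matrix.trace, Matrix.diag, Matrix.mul_apply, genX, Fin.sum_univ_two,
    map_add, map_mul, aeval_X, spec,
    Matrix.cons_val_zero, Matrix.cons_val_one, Matrix.head_cons]
  ring_nf
  rw [(map_ofNat C 2 : (C : ℂ →+* R5) 2 = 2).symm]
  simp only [← C_pow]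
  simp only [← C_mul, mul_comm, mul_assoc, mul_left_comm]
  norm_num

lemma key3 : (aeval spec : GenRing →ₐ[ℂ] R5) (Matrix.trace (genY * genY)) = X 3 := by
  simp only [Matrix.trace, Matrix.diag, Matrix.mul_apply, genY, Fin.sum_univ_two,
    map_add, map_mul, aeval_X, spec,
    Matrix.cons_val_zero, Matrix.cons_val_one, Matrix.head_cons]
  ring_nf
  rw [(map_ofNat C 2 : (C : ℂ →+* R5) 2 = 2).symm]
  simp only [← C_pow]
  simp only [← C_mul, mul_comm, mul_assoc, mul_left_comm]
  norm_num

lemma key4 : (aeval spec : GenRing →ₐ[ℂ] R5) (Matrix.trace (genX * genY))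
    = Pjunk - X 4 ^ 2 := by
  simp only [Matrix.trace, Matrix.diag, Matrix.mul_apply, genX, genY, Fin.sum_univ_two,
    map_add, map_mul, aeval_X, spec, Pjunk,
    Matrix.cons_val_zero, Matrix.cons_val_one, Matrix.head_cons]
  ring_nf
  try rw [(map_ofNat C 2 : (C : ℂ →+* R5) 2 = 2).symm]
  try simp only [← C_pow]
  try simp only [← C_mul, mul_comm, mul_assoc, mul_left_comm]
  try norm_num
  try ring

theorem traces_algebraicIndependent :
    AlgebraicIndependent ℂ
      ![Matrix.trace genX, Matrix.trace genY, Matrix.trace (genX * genX),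
        Matrix.trace (genY * genY), Matrix.trace (genX * genY)] := by
  apply AlgebraicIndependent.of_comp (aeval spec : GenRing →ₐ[ℂ] R5)
  have key : (⇑(aeval spec : GenRing →ₐ[ℂ] R5)) ∘
      ![Matrix.trace genX, Matrix.trace genY, Matrix.trace (genX * genX),
        Matrix.trace (genY * genY), Matrix.trace (genX * genY)] = vfam := by
    funext i
    fin_cases i
    · exact key0
    · exact key1
    · exact key2
    · exact key3
    · exact key4
  rw [key]
  exact vfam_indep
end
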